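/- arXiv:2312.11183 — 4 statements merged into one kernel-verified Lean document; each statement's English description precedes it below -/
import Mathlib

section
/- For each fixed nonnegative integer k, the number N(k,n) of permutations of {1,...,n} with exactly k descents satisfies N(k,n) = (k+1)^n (1 + o(1)) as n → ∞; equivalently N(k,n)/(k+1)^n tends to 1. -/
open Filter

/-- Number of descents of a permutation of `Fin n`: indices `i` with `σ(i) > σ(i+1)`. -/
def descentNum {n : ℕ} (σ : Equiv.Perm (Fin n)) : ℕ :=
  (Finset.univ.filter (fun p : Fin n × Fin n =>
    (p.2 : ℕ) = (p.1 : ℕ) + 1 ∧ σ p.2 < σ p.1)).card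

/-- Number of permutations of `{1,…,n}` with exactly `k` descents. -/
def eulerianNum (k n : ℕ) : ℕ :=
  (Finset.univ.filter (fun σ : Equiv.Perm (Fin n) => descentNum σ = k)).card

namespace EulerAux

variable {n : ℕ}

/-- Number of descent positions `j` of `σ` with `j+1 ≤ m`. -/
def dB (σ : Equiv.Perm (Fin n)) (m : ℕ) : ℕ :=
  (Finset.univ.filter (fun p : Fin n × Fin n =>
    (p.2 : ℕ) = (p.1 : ℕ) + 1 ∧ σ p.2 < σ p.1 ∧ (p.2 : ℕ) ≤ m)).card

lemma dB_le (σ : Equiv.Perm (Fin n)) (m : ℕ) : dB σ m ≤ descentNum σ := by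
  apply Finset.card_le_card
  intro p hp
  simp only [Finset.mem_filter, Finset.mem_univ, true_and, dB, descentNum] at hp ⊢
  exact ⟨hp.1, hp.2.1⟩

lemma dB_mono (σ : Equiv.Perm (Fin n)) {m m' : ℕ} (h : m ≤ m') : dB σ m ≤ dB σ m' := by
  apply Finset.card_le_card
  intro p hp
  simp only [Finset.mem_filter, Finset.mem_univ, true_and, dB] at hp ⊢
  exact ⟨hp.1, hp.2.1, le_trans hp.2.2 h⟩

lemma dB_zero (σ : Equiv.Perm (Fin n)) : dB σ 0 = 0 := by
  rw [dB, Finset.card_eq_zero, Finset.filter_eq_empty_iff]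
  rintro p - ⟨h1, -, h3⟩
  omega

lemma dB_last (σ : Equiv.Perm (Fin n)) (hn : n ≠ 0) : dB σ (n - 1) = descentNum σ := by
  rw [dB, descentNum]
  congr 1
  ext p
  simp only [Finset.mem_filter, Finset.mem_univ, true_and]
  have h2 : (p.2 : ℕ) < n := p.2.isLt
  constructor
  · rintro ⟨a, b, -⟩; exact ⟨a, b⟩
  · rintro ⟨a, b⟩; exact ⟨a, b, by omega⟩

lemma dB_succ (σ : Equiv.Perm (Fin n)) (i : Fin n) (h : (i : ℕ) + 1 < n) :
    dB σ ((i : ℕ) + 1) = dB σ (i : ℕ) + (if σ ⟨(i : ℕ) + 1, h⟩ < σ i then 1 else 0) := by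
  classical
  set j : Fin n := ⟨(i : ℕ) + 1, h⟩ with hj
  have hsplit : (Finset.univ.filter (fun p : Fin n × Fin n =>
      (p.2 : ℕ) = (p.1 : ℕ) + 1 ∧ σ p.2 < σ p.1 ∧ (p.2 : ℕ) ≤ (i : ℕ) + 1)) =
      (Finset.univ.filter (fun p : Fin n × Fin n =>
      (p.2 : ℕ) = (p.1 : ℕ) + 1 ∧ σ p.2 < σ p.1 ∧ (p.2 : ℕ) ≤ (i : ℕ))) ∪
      (Finset.univ.filter (fun p : Fin n × Fin n =>
      (p.2 : ℕ) = (p.1 : ℕ) + 1 ∧ σ p.2 < σ p.1 ∧ (p.2 : ℕ) = (i : ℕ) + 1)) := by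
    ext p
    simp only [Finset.mem_filter, Finset.mem_univ, true_and, Finset.mem_union]
    constructor
    · rintro ⟨a, b, c⟩
      rcases (by omega : (p.2 : ℕ) ≤ (i : ℕ) ∨ (p.2 : ℕ) = (i : ℕ) + 1) with h' | h'
      · exact Or.inl ⟨a, b, h'⟩
      · exact Or.inr ⟨a, b, h'⟩
    · rintro (⟨a, b, c⟩ | ⟨a, b, c⟩) <;> exact ⟨a, b, by omega⟩
  have hdisj : Disjoint (Finset.univ.filter (fun p : Fin n × Fin n =>
      (p.2 : ℕ) = (p.1 : ℕ) + 1 ∧ σ p.2 < σ p.1 ∧ (p.2 : ℕ) ≤ (i : ℕ)))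
      (Finset.univ.filter (fun p : Fin n × Fin n =>
      (p.2 : ℕ) = (p.1 : ℕ) + 1 ∧ σ p.2 < σ p.1 ∧ (p.2 : ℕ) = (i : ℕ) + 1)) := by
    rw [Finset.disjoint_left]
    rintro p hp hq
    simp only [Finset.mem_filter, Finset.mem_univ, true_and] at hp hq
    omega
  have hsec : (Finset.univ.filter (fun p : Fin n × Fin n =>
      (p.2 : ℕ) = (p.1 : ℕ) + 1 ∧ σ p.2 < σ p.1 ∧ (p.2 : ℕ) = (i : ℕ) + 1)) =
      if σ j < σ i then {(i, j)} else ∅ := by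
    ext p
    simp only [Finset.mem_filter, Finset.mem_univ, true_and]
    split_ifs with hd
    · simp only [Finset.mem_singleton, Prod.ext_iff]
      constructor
      · rintro ⟨a, b, c⟩
        have hp2 : p.2 = j := Fin.ext (by simpa [hj] using c)
        have hp1 : p.1 = i := Fin.ext (by omega)
        exact ⟨hp1, hp2⟩
      · rintro ⟨h1, h2⟩
        rw [h1, h2]
        exact ⟨rfl, hd, rfl⟩
    · simp only [Finset.notMem_empty, iff_false]
      rintro ⟨a, b, c⟩
      have hp2 : p.2 = j := Fin.ext (by simpa [hj] using c)
      have hp1 : p.1 = i := Fin.ext (by omega)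
      rw [hp1, hp2] at b
      exact hd b
  rw [dB, dB, hsplit, Finset.card_union_of_disjoint hdisj, hsec]
  congr 1
  split_ifs <;> simp


lemma key (σ : Equiv.Perm (Fin n)) (s : Fin n → ℕ)
    (H1 : ∀ i j : Fin n, i ≤ j → s i ≤ s j)
    (H2 : ∀ i j : Fin n, (j : ℕ) = (i : ℕ) + 1 → σ j < σ i → s i < s j) :
    ∀ (m : ℕ) (hm : m < n) (i : Fin n), (i : ℕ) ≤ m →
      s i + dB σ m ≤ s ⟨m, hm⟩ + dB σ (i : ℕ) := by
  intro m
  induction m with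
  | zero =>
    intro hm i hi
    have : i = ⟨0, hm⟩ := Fin.ext (by simpa using hi)
    rw [this]
  | succ m ih =>
    intro hm i hi
    rcases eq_or_lt_of_le hi with heq | hlt
    · have : i = ⟨m + 1, hm⟩ := Fin.ext (by simpa using heq)
      rw [this]
    · have hm' : m < n := by omega
      have ihh := ih hm' i (by omega)
      have hstep := dB_succ σ ⟨m, hm'⟩ (by simpa using hm)
      simp only [Fin.val_mk] at hstep
      rw [hstep]
      by_cases hd : σ ⟨m + 1, hm⟩ < σ ⟨m, hm'⟩
      · have hs := H2 ⟨m, hm'⟩ ⟨m + 1, hm⟩ (by simp) hd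
        rw [if_pos hd]
        omega
      · have hs : s ⟨m, hm'⟩ ≤ s ⟨m + 1, hm⟩ := H1 _ _ (by simp [Fin.le_def])
        rw [if_neg hd]
        omega

lemma tie1 (σ : Equiv.Perm (Fin n)) (m : ℕ) (hm1 : m + 1 < n)
    (hdb : dB σ m = dB σ (m + 1)) :
    σ ⟨m, by omega⟩ < σ ⟨m + 1, hm1⟩ := by
  have hstep := dB_succ σ ⟨m, by omega⟩ (by simpa using hm1)
  simp only [Fin.val_mk] at hstep
  by_cases hd : σ ⟨m + 1, hm1⟩ < σ ⟨m, by omega⟩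
  · rw [if_pos hd] at hstep
    omega
  · have hne : σ ⟨m, by omega⟩ ≠ σ ⟨m + 1, hm1⟩ := by
      intro h
      have := σ.injective h
      simp [Fin.ext_iff] at this
    exact lt_of_le_of_ne (not_lt.mp hd) hne

lemma tie (σ : Equiv.Perm (Fin n)) :
    ∀ (m : ℕ) (hm : m < n) (i : Fin n), (i : ℕ) < m →
      dB σ (i : ℕ) = dB σ m → σ i < σ ⟨m, hm⟩ := by
  intro m
  induction m with
  | zero => omega
  | succ m ih =>
    intro hm i hi hdb
    have hm' : m < n := by omega
    have h1 : dB σ (i : ℕ) ≤ dB σ m := dB_mono σ (by omega)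
    have h2 : dB σ m ≤ dB σ (m + 1) := dB_mono σ (by omega)
    have e2 : dB σ m = dB σ (m + 1) := by omega
    have ht := tie1 σ m hm e2
    rcases eq_or_lt_of_le (by omega : (i : ℕ) ≤ m) with heq | hlt
    · have : i = ⟨m, hm'⟩ := Fin.ext (by simpa using heq)
      rw [this]
      exact ht
    · have := ih hm' i hlt (by omega)
      exact lt_trans this ht


/-- The canonical function attached to a permutation: `x` maps to the number of
descents strictly before the position of `x`. -/
def fS (σ : Equiv.Perm (Fin n)) (b : ℕ) : Fin n → Fin (b + 1) :=
  fun x => ⟨min (dB σ ((σ.symm x : Fin n) : ℕ)) b, by omega⟩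

lemma sort_fS (σ : Equiv.Perm (Fin n)) (b : ℕ) (hb : descentNum σ ≤ b) :
    Tuple.sort (fS σ b) = σ := by
  symm
  rw [Tuple.eq_sort_iff]
  have hval : ∀ i : Fin n, ((fS σ b (σ i)) : ℕ) = dB σ (i : ℕ) := by
    intro i
    simp only [fS, Equiv.symm_apply_apply]
    exact min_eq_left (le_trans (dB_le σ _) hb)
  constructor
  · intro i j hij
    rw [Fin.le_def]
    simp only [Function.comp_apply]
    rw [hval, hval]
    exact dB_mono σ hij
  · intro i j hij hf
    have hdb : dB σ (i : ℕ) = dB σ (j : ℕ) := by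
      rw [← hval, ← hval, hf]
    have := tie σ (j : ℕ) j.isLt i (Fin.lt_def.mp hij) hdb
    simpa using this

lemma sort_H {b : ℕ} (f : Fin n → Fin (b + 1)) (i j : Fin n)
    (hji : (j : ℕ) = (i : ℕ) + 1) (hd : Tuple.sort f j < Tuple.sort f i) :
    ((f (Tuple.sort f i)) : ℕ) < ((f (Tuple.sort f j)) : ℕ) := by
  have hij : i < j := by rw [Fin.lt_def]; omega
  have hle : f (Tuple.sort f i) ≤ f (Tuple.sort f j) := Tuple.monotone_sort f (le_of_lt hij)
  rcases lt_or_eq_of_le hle with h | h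
  · exact h
  · have hties := ((Tuple.eq_sort_iff (f := f) (σ := Tuple.sort f)).mp rfl).2
    have := hties i j hij h
    exact absurd hd (asymm this)

lemma sort_H1 {b : ℕ} (f : Fin n → Fin (b + 1)) (i j : Fin n) (hij : i ≤ j) :
    ((f (Tuple.sort f i)) : ℕ) ≤ ((f (Tuple.sort f j)) : ℕ) :=
  Tuple.monotone_sort f hij

lemma descent_sort_le (b : ℕ) (hn : n ≠ 0) (f : Fin n → Fin (b + 1)) :
    descentNum (Tuple.sort f) ≤ b := by
  have h0 : 0 < n := Nat.pos_of_ne_zero hn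
  have hk := key (Tuple.sort f) (fun i => ((f (Tuple.sort f i)) : ℕ))
    (sort_H1 f) (sort_H f) (n - 1) (by omega) ⟨0, h0⟩ (by simp)
  rw [dB_last _ hn] at hk
  simp only [Fin.val_mk, dB_zero] at hk
  have hsb : ((f (Tuple.sort f ⟨n - 1, by omega⟩)) : ℕ) ≤ b :=
    Nat.lt_succ_iff.mp (f _).isLt
  omega

lemma eq_fS_of_sort (k : ℕ) (hn : n ≠ 0) (f : Fin n → Fin (k + 1))
    (hd : descentNum (Tuple.sort f) = k) : f = fS (Tuple.sort f) k := by
  have h0 : 0 < n := Nat.pos_of_ne_zero hn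
  have hpt : ∀ i : Fin n, ((f (Tuple.sort f i)) : ℕ) = dB (Tuple.sort f) (i : ℕ) := by
    intro i
    have hk1 := key (Tuple.sort f) (fun i => ((f (Tuple.sort f i)) : ℕ))
      (sort_H1 f) (sort_H f) (i : ℕ) i.isLt ⟨0, h0⟩ (by simp)
    have hk2 := key (Tuple.sort f) (fun i => ((f (Tuple.sort f i)) : ℕ))
      (sort_H1 f) (sort_H f) (n - 1) (by omega) i (by have := i.isLt; omega)
    rw [dB_last _ hn, hd] at hk2
    simp only [Fin.val_mk, dB_zero, Fin.eta] at hk1 hk2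
    have hsb : ((f (Tuple.sort f ⟨n - 1, by omega⟩)) : ℕ) ≤ k :=
      Nat.lt_succ_iff.mp (f _).isLt
    omega
  funext x
  apply Fin.ext
  have hx := hpt ((Tuple.sort f).symm x)
  simp only [Equiv.apply_symm_apply] at hx
  simp only [fS, Fin.val_mk]
  rw [min_eq_left (le_trans (dB_le _ _) (le_of_eq hd)), ← hx]


lemma card_filter_val_lt (N m : ℕ) :
    ((Finset.univ : Finset (Fin N)).filter (fun j : Fin N => (j : ℕ) < m)).card = min m N := by
  classical
  have himg : ((Finset.univ : Finset (Fin N)).filter (fun j : Fin N => (j : ℕ) < m)).image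
      (fun j : Fin N => (j : ℕ)) = Finset.range (min m N) := by
    ext a
    simp only [Finset.mem_image, Finset.mem_filter, Finset.mem_univ, true_and,
      Finset.mem_range]
    constructor
    · rintro ⟨j, hj, rfl⟩
      have := j.isLt
      omega
    · intro ha
      exact ⟨⟨a, by omega⟩, (by omega : a < m), rfl⟩
  have hinj := Finset.card_image_of_injective
    ((Finset.univ : Finset (Fin N)).filter (fun j : Fin N => (j : ℕ) < m)) (Fin.val_injective)
  rw [← hinj, himg, Finset.card_range]

lemma card_good (k : ℕ) (hn : n ≠ 0) :
    ((Finset.univ : Finset (Fin n → Fin (k + 1))).filter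
      (fun f => descentNum (Tuple.sort f) = k)).card = eulerianNum k n := by
  rw [eulerianNum]
  apply Finset.card_bij (fun f _ => Tuple.sort f)
  · intro f hf
    simp only [Finset.mem_filter, Finset.mem_univ, true_and] at hf ⊢
    exact hf
  · intro f1 h1 f2 h2 heq
    simp only [Finset.mem_filter, Finset.mem_univ, true_and] at h1 h2
    rw [eq_fS_of_sort k hn f1 h1, eq_fS_of_sort k hn f2 h2, heq]
  · intro σ hσ
    simp only [Finset.mem_filter, Finset.mem_univ, true_and] at hσ
    refine ⟨fS σ k, ?_, sort_fS σ k (le_of_eq hσ)⟩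
    simp only [Finset.mem_filter, Finset.mem_univ, true_and]
    rw [sort_fS σ k (le_of_eq hσ)]
    exact hσ

lemma euler_le (j m : ℕ) : eulerianNum j m ≤ (j + 1) ^ m := by
  have h : eulerianNum j m ≤ (Finset.univ : Finset (Fin m → Fin (j + 1))).card := by
    rw [eulerianNum]
    apply Finset.card_le_card_of_injOn (fun σ => fS σ j) (fun _ _ => Finset.mem_univ _)
    intro σ1 h1 σ2 h2 heq
    dsimp only at heq
    simp only [Finset.coe_filter, Set.mem_setOf_eq, Finset.mem_univ, true_and] at h1 h2
    rw [← sort_fS σ1 j (le_of_eq h1), ← sort_fS σ2 j (le_of_eq h2), heq]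
  simpa [Finset.card_univ, Fintype.card_fun] using h

/-- The "threshold statistics" of a function, used to bound fibers of `Tuple.sort`. -/
def cnt {k : ℕ} (f : Fin n → Fin (k + 1)) : Fin k → Fin (n + 1) :=
  fun v => ⟨(Finset.univ.filter
      (fun i : Fin n => ((f (Tuple.sort f i)) : ℕ) ≤ (v : ℕ))).card,
    Nat.lt_succ_of_le (le_trans (Finset.card_filter_le _ _) (by simp))⟩

lemma cnt_le_iff {k : ℕ} (f : Fin n → Fin (k + 1)) (v : Fin k) (i : Fin n) :
    ((cnt f v) : ℕ) ≤ (i : ℕ) ↔ (v : ℕ) < ((f (Tuple.sort f i)) : ℕ) := by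
  simp only [cnt, Fin.val_mk]
  constructor
  · intro h
    by_contra hc
    push_neg at hc
    have hsub : (Finset.univ.filter (fun j : Fin n => (j : ℕ) < (i : ℕ) + 1)) ⊆
        (Finset.univ.filter
          (fun j : Fin n => ((f (Tuple.sort f j)) : ℕ) ≤ (v : ℕ))) := by
      intro j hj
      simp only [Finset.mem_filter, Finset.mem_univ, true_and] at hj ⊢
      have hle : j ≤ i := by rw [Fin.le_def]; omega
      exact le_trans (sort_H1 f j i hle) hc
    have hcard := Finset.card_le_card hsub
    rw [card_filter_val_lt] at hcard
    have hiN := i.isLt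
    omega
  · intro h
    have hsub : (Finset.univ.filter
        (fun j : Fin n => ((f (Tuple.sort f j)) : ℕ) ≤ (v : ℕ))) ⊆
        (Finset.univ.filter (fun j : Fin n => (j : ℕ) < (i : ℕ))) := by
      intro j hj
      simp only [Finset.mem_filter, Finset.mem_univ, true_and] at hj ⊢
      by_contra hc
      push_neg at hc
      have := sort_H1 f i j (by rw [Fin.le_def]; omega)
      omega
    have hcard := Finset.card_le_card hsub
    rw [card_filter_val_lt] at hcard
    omega

lemma g_eq_card {k : ℕ} (f : Fin n → Fin (k + 1)) (i : Fin n) :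
    ((f (Tuple.sort f i)) : ℕ) =
      (Finset.univ.filter (fun v : Fin k => ((cnt f v) : ℕ) ≤ (i : ℕ))).card := by
  have heq : (Finset.univ.filter (fun v : Fin k => ((cnt f v) : ℕ) ≤ (i : ℕ)))
      = (Finset.univ.filter
          (fun v : Fin k => (v : ℕ) < ((f (Tuple.sort f i)) : ℕ))) := by
    ext v
    simp only [Finset.mem_filter, Finset.mem_univ, true_and]
    exact cnt_le_iff f v i
  rw [heq, card_filter_val_lt]
  have := (f (Tuple.sort f i)).isLt
  omega

lemma card_lt_le (k : ℕ) :
    ((Finset.univ : Finset (Equiv.Perm (Fin n))).filter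
      (fun σ => descentNum σ < k)).card ≤ k * k ^ n := by
  classical
  have hsub : ((Finset.univ : Finset (Equiv.Perm (Fin n))).filter
      (fun σ => descentNum σ < k)) ⊆ (Finset.range k).biUnion
        (fun j => (Finset.univ : Finset (Equiv.Perm (Fin n))).filter
          (fun σ => descentNum σ = j)) := by
    intro σ hσ
    simp only [Finset.mem_filter, Finset.mem_univ, true_and] at hσ
    simp only [Finset.mem_biUnion, Finset.mem_range, Finset.mem_filter, Finset.mem_univ,
      true_and]
    exact ⟨descentNum σ, hσ, rfl⟩
  calc ((Finset.univ : Finset (Equiv.Perm (Fin n))).filter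
      (fun σ => descentNum σ < k)).card
      ≤ ((Finset.range k).biUnion (fun j => (Finset.univ : Finset (Equiv.Perm (Fin n))).filter
          (fun σ => descentNum σ = j))).card := Finset.card_le_card hsub
    _ ≤ ∑ j ∈ Finset.range k, ((Finset.univ : Finset (Equiv.Perm (Fin n))).filter
          (fun σ => descentNum σ = j)).card := Finset.card_biUnion_le
    _ ≤ ∑ j ∈ Finset.range k, k ^ n := by
        apply Finset.sum_le_sum
        intro j hj
        simp only [Finset.mem_range] at hj
        calc ((Finset.univ : Finset (Equiv.Perm (Fin n))).filter
            (fun σ => descentNum σ = j)).card = eulerianNum j n := rfl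
          _ ≤ (j + 1) ^ n := euler_le j n
          _ ≤ k ^ n := Nat.pow_le_pow_left (by omega) n
    _ = k * k ^ n := by
        rw [Finset.sum_const, Finset.card_range, smul_eq_mul]

lemma card_bad_le (k : ℕ) (hn : n ≠ 0) :
    ((Finset.univ : Finset (Fin n → Fin (k + 1))).filter
      (fun f => ¬ descentNum (Tuple.sort f) = k)).card ≤ k * k ^ n * (n + 1) ^ k := by
  classical
  have hstep : ((Finset.univ : Finset (Fin n → Fin (k + 1))).filter
      (fun f => ¬ descentNum (Tuple.sort f) = k)).card ≤
      (((Finset.univ : Finset (Equiv.Perm (Fin n))).filter (fun σ => descentNum σ < k)) ×ˢ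
        (Finset.univ : Finset (Fin k → Fin (n + 1)))).card := by
    apply Finset.card_le_card_of_injOn (fun f => (Tuple.sort f, cnt f))
    · intro f hf
      simp only [Finset.mem_coe, Finset.mem_filter, Finset.mem_univ, true_and] at hf
      simp only [Finset.mem_coe, Finset.mem_product, Finset.mem_filter, Finset.mem_univ, true_and, and_true]
      exact lt_of_le_of_ne (descent_sort_le k hn f) hf
    · intro f1 h1 f2 h2 heq
      simp only [Prod.mk.injEq] at heq
      obtain ⟨hsort, hcnt⟩ := heq
      funext x
      apply Fin.ext
      have e1 := g_eq_card f1 ((Tuple.sort f1).symm x)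
      have e2 := g_eq_card f2 ((Tuple.sort f2).symm x)
      simp only [Equiv.apply_symm_apply] at e1 e2
      rw [e1, e2, hcnt, hsort]
  calc ((Finset.univ : Finset (Fin n → Fin (k + 1))).filter
      (fun f => ¬ descentNum (Tuple.sort f) = k)).card
      ≤ _ := hstep
    _ = ((Finset.univ : Finset (Equiv.Perm (Fin n))).filter
          (fun σ => descentNum σ < k)).card * (n + 1) ^ k := by
        rw [Finset.card_product, Finset.card_univ, Fintype.card_fun, Fintype.card_fin,
          Fintype.card_fin]
    _ ≤ k * k ^ n * (n + 1) ^ k := by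
        exact Nat.mul_le_mul_right _ (card_lt_le k)

lemma main_count (k : ℕ) (hn : n ≠ 0) :
    eulerianNum k n + ((Finset.univ : Finset (Fin n → Fin (k + 1))).filter
      (fun f => ¬ descentNum (Tuple.sort f) = k)).card = (k + 1) ^ n := by
  classical
  rw [← card_good k hn, Finset.card_filter_add_card_filter_not]
  rw [Finset.card_univ, Fintype.card_fun, Fintype.card_fin, Fintype.card_fin]

lemma euler_ge (k : ℕ) (hn : n ≠ 0) :
    (k + 1) ^ n ≤ eulerianNum k n + k * k ^ n * (n + 1) ^ k := by
  have h1 := main_count (n := n) k hn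
  have h2 := card_bad_le (n := n) k hn
  omega

lemma euler_le_pow (k : ℕ) (hn : n ≠ 0) : eulerianNum k n ≤ (k + 1) ^ n := by
  have h1 := main_count (n := n) k hn
  omega

end EulerAux


/-- For each fixed `k`, `N(k,n) = (k+1)^n (1+o(1))` as `n → ∞`. -/
theorem eulerian_asymp (k : ℕ) :
    Tendsto (fun n : ℕ => (eulerianNum k n : ℝ) / (k + 1) ^ n) atTop (nhds 1) := by
  have hk1 : (0 : ℝ) < (k : ℝ) + 1 := by positivity
  have hpow : ∀ n : ℕ, (0 : ℝ) < ((k : ℝ) + 1) ^ n := fun n => pow_pos hk1 n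
  set r : ℝ := (k : ℝ) / ((k : ℝ) + 1) with hr
  have hr0 : 0 ≤ r := by positivity
  have hr1 : r < 1 := by
    rw [hr, div_lt_one hk1]
    linarith
  set e : ℕ → ℝ := fun n => (k : ℝ) * (k : ℝ) ^ n * ((n : ℝ) + 1) ^ k / ((k : ℝ) + 1) ^ n
    with he
  have he0 : Tendsto e atTop (nhds 0) := by
    have hbase : Tendsto (fun n : ℕ => ((n : ℝ)) ^ k * r ^ n) atTop (nhds 0) := by
      apply Summable.tendsto_atTop_zero
      exact summable_pow_mul_geometric_of_norm_lt_one k (by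
        rw [Real.norm_eq_abs, abs_of_nonneg hr0]; exact hr1)
    have hg : Tendsto (fun n : ℕ => ((k : ℝ) * 2 ^ k) * (((n : ℝ)) ^ k * r ^ n)) atTop
        (nhds 0) := by
      simpa using hbase.const_mul ((k : ℝ) * 2 ^ k)
    apply squeeze_zero' ?_ ?_ hg
    · filter_upwards with n
      rw [he]
      positivity
    · filter_upwards [eventually_ge_atTop 1] with n hn
      have hn1 : (1 : ℝ) ≤ (n : ℝ) := by exact_mod_cast hn
      have hen : e n = (k : ℝ) * ((n : ℝ) + 1) ^ k * r ^ n := by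
        rw [he, hr, div_pow]
        field_simp
      have hnn : ((n : ℝ) + 1) ^ k ≤ (2 : ℝ) ^ k * (n : ℝ) ^ k := by
        calc ((n : ℝ) + 1) ^ k ≤ (2 * (n : ℝ)) ^ k := by
              apply pow_le_pow_left₀ (by positivity)
              linarith
          _ = (2 : ℝ) ^ k * (n : ℝ) ^ k := mul_pow 2 _ k
      rw [hen]
      have hrn : (0 : ℝ) ≤ r ^ n := pow_nonneg hr0 n
      calc (k : ℝ) * ((n : ℝ) + 1) ^ k * r ^ n
          ≤ (k : ℝ) * ((2 : ℝ) ^ k * (n : ℝ) ^ k) * r ^ n := by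
            apply mul_le_mul_of_nonneg_right _ hrn
            exact mul_le_mul_of_nonneg_left hnn (by positivity)
        _ = ((k : ℝ) * 2 ^ k) * (((n : ℝ)) ^ k * r ^ n) := by ring
  have hfinal : Tendsto (fun n : ℕ => 1 - e n) atTop (nhds 1) := by
    simpa using (tendsto_const_nhds (x := (1 : ℝ)) (f := atTop)).sub he0
  apply tendsto_of_tendsto_of_tendsto_of_le_of_le' hfinal
    (tendsto_const_nhds (x := (1 : ℝ)))
  · filter_upwards [eventually_ge_atTop 1] with n hn
    have hnz : n ≠ 0 := by omega
    have hge := EulerAux.euler_ge (n := n) k hnz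
    have hcast : ((k : ℝ) + 1) ^ n ≤ (eulerianNum k n : ℝ)
        + (k : ℝ) * (k : ℝ) ^ n * ((n : ℝ) + 1) ^ k := by
      have := hge
      push_cast at this ⊢
      exact_mod_cast this
    rw [le_div_iff₀ (hpow n)]
    have hcancel : e n * ((k : ℝ) + 1) ^ n
        = (k : ℝ) * (k : ℝ) ^ n * ((n : ℝ) + 1) ^ k := by
      rw [he]
      field_simp
    nlinarith [hcast, hcancel, hpow n]
  · filter_upwards [eventually_ge_atTop 1] with n hn
    have hnz : n ≠ 0 := by omega
    have hle := EulerAux.euler_le_pow (n := n) k hnz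
    rw [div_le_one (hpow n)]
    exact_mod_cast hle
end

section
/- For any permutation τ ∈ S_n with exactly k descents, the probability that the random permutation D_n^k equals τ is (k+1)^{-n}, where D_n^k is constructed from n i.i.d. uniform random variables A_1,...,A_n on {1,...,k+1} by concatenating, in order i = 1,...,k+1, the increasingly sorted lists of indices j with A_j = i. In particular, conditioned on having exactly k descents, D_n^k is uniform on the set of permutations with k descents. -/
/-- Given a tuple `a : Fin n → Fin (k+1)`, the permutation `D_n^k` obtained by
concatenating, for `i = 0, …, k` in order, the increasingly sorted lists of indices `j`
with `a j = i`.  This is exactly the permutation sorting the pairs `(a j, j)`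
lexicographically, i.e. `Tuple.sort a`. -/
def dPerm {n k : ℕ} (a : Fin n → Fin (k + 1)) : Equiv.Perm (Fin n) :=
  Tuple.sort a

open Finset in
lemma dPerm_count_one {n k : ℕ} (τ : Equiv.Perm (Fin n)) (hτ : descentNum τ = k) :
    (Finset.univ.filter (fun a : Fin n → Fin (k + 1) => dPerm a = τ)).card = 1 := by
  classical
  set D : Finset (Fin n × Fin n) :=
    Finset.univ.filter (fun p : Fin n × Fin n =>
      (p.2 : ℕ) = (p.1 : ℕ) + 1 ∧ τ p.2 < τ p.1) with hD
  have hDcard : D.card = k := hτ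
  set c : ℕ → ℕ := fun m => (D.filter (fun p => (p.1 : ℕ) < m)).card with hc
  have hc_mono : ∀ {m m' : ℕ}, m ≤ m' → c m ≤ c m' := by
    intro m m' h
    apply Finset.card_le_card
    intro p hp
    simp only [Finset.mem_filter] at hp ⊢
    exact ⟨hp.1, lt_of_lt_of_le hp.2 h⟩
  have hc_le : ∀ m, c m ≤ k := by
    intro m; rw [← hDcard]; exact Finset.card_le_card (Finset.filter_subset _ _)
  have hc0 : c 0 = 0 := by
    simp [hc]
  have hclast : ∀ m, n ≤ m + 1 → c m = k := by
    intro m hm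
    rw [← hDcard]
    simp only [hc]
    congr 1
    apply Finset.filter_true_of_mem
    intro p hp
    simp only [hD, Finset.mem_filter] at hp
    have h2 : (p.2 : ℕ) < n := p.2.isLt
    omega
  -- step lemma
  have hstep : ∀ i j : Fin n, (j : ℕ) = (i : ℕ) + 1 →
      c (j : ℕ) = c (i : ℕ) + (if τ j < τ i then 1 else 0) := by
    intro i j hj
    have hsplit : D.filter (fun p => (p.1 : ℕ) < (j : ℕ)) =
        D.filter (fun p => (p.1 : ℕ) < (i : ℕ)) ∪ D.filter (fun p => (p.1 : ℕ) = (i : ℕ)) := by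
      ext p
      simp only [Finset.mem_filter, Finset.mem_union]
      constructor
      · rintro ⟨hp, hlt⟩
        rcases Nat.lt_or_ge (p.1 : ℕ) (i : ℕ) with h | h
        · exact Or.inl ⟨hp, h⟩
        · exact Or.inr ⟨hp, by omega⟩
      · rintro (⟨hp, h⟩ | ⟨hp, h⟩) <;> exact ⟨hp, by omega⟩
    have hdisj : Disjoint (D.filter (fun p => (p.1 : ℕ) < (i : ℕ)))
        (D.filter (fun p => (p.1 : ℕ) = (i : ℕ))) := by
      rw [Finset.disjoint_left]
      intro p hp hq
      simp only [Finset.mem_filter] at hp hq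
      omega
    have hsecond : D.filter (fun p => (p.1 : ℕ) = (i : ℕ)) =
        if τ j < τ i then {(i, j)} else ∅ := by
      split_ifs with hd
      · ext p
        simp only [Finset.mem_filter, Finset.mem_singleton, hD, Finset.mem_univ, true_and]
        constructor
        · rintro ⟨⟨h1, h2⟩, h3⟩
          have hp1 : p.1 = i := Fin.ext h3
          have hp2 : p.2 = j := Fin.ext (by omega)
          exact Prod.ext hp1 hp2
        · rintro rfl
          refine ⟨⟨?_, ?_⟩, rfl⟩ <;> simp [hj, hd]
      · ext p
        simp only [Finset.mem_filter, Finset.notMem_empty, iff_false, hD, Finset.mem_univ,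
          true_and, not_and]
        rintro ⟨h1, h2⟩ h3
        have hp1 : p.1 = i := Fin.ext h3
        have hp2 : p.2 = j := Fin.ext (by omega)
        rw [hp1, hp2] at h2
        exact hd h2
    have := Finset.card_union_of_disjoint hdisj
    simp only [hc]
    rw [hsplit, this, hsecond]
    split_ifs <;> simp
  -- main inequality
  have hM : ∀ (a : Fin n → Fin (k + 1)),
      (Monotone (a ∘ τ) ∧ ∀ i j, i < j → a (τ i) = a (τ j) → τ i < τ j) →
      ∀ (m : ℕ) (i j : Fin n), (j : ℕ) = m → i ≤ j →
        (a (τ i) : ℕ) + c (j : ℕ) ≤ (a (τ j) : ℕ) + c (i : ℕ) := by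
    rintro a ⟨hmono, htie⟩ m
    induction m with
    | zero =>
      intro i j hj hij
      have : i = j := Fin.le_antisymm hij (by rw [Fin.le_def]; omega)
      subst this; omega
    | succ m ih =>
      intro i j hj hij
      rcases eq_or_lt_of_le hij with rfl | hlt
      · omega
      have hmn : m < n := by have := j.isLt; omega
      set j' : Fin n := ⟨m, hmn⟩ with hj'
      have hij' : i ≤ j' := by rw [Fin.le_def]; rw [Fin.lt_def] at hlt; simp [hj']; omega
      have ihm := ih i j' rfl hij'
      have hstepc := hstep j' j (by simp [hj', hj])
      have hj'j : j' ≤ j := by rw [Fin.le_def]; simp [hj']; omega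
      have hstepa : (a (τ j') : ℕ) + (if τ j < τ j' then 1 else 0) ≤ (a (τ j) : ℕ) := by
        have hle : a (τ j') ≤ a (τ j) := hmono hj'j
        split_ifs with hd
        · have hne : a (τ j') ≠ a (τ j) := by
            intro he
            have hj'ltj : j' < j := by rw [Fin.lt_def]; simp [hj']; omega
            exact absurd (htie j' j hj'ltj he) (asymm hd)
          have : a (τ j') < a (τ j) := lt_of_le_of_ne hle hne
          rw [Fin.lt_def] at this; omega
        · rw [Fin.le_def] at hle; omega
      simp only [hj'] at hstepc ihm hstepa
      omega
  -- characterization of values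
  have hval : ∀ (a : Fin n → Fin (k + 1)),
      (Monotone (a ∘ τ) ∧ ∀ i j, i < j → a (τ i) = a (τ j) → τ i < τ j) →
      ∀ i : Fin n, (a (τ i) : ℕ) = c (i : ℕ) := by
    intro a hC i
    have hn : 0 < n := i.pos
    set i0 : Fin n := ⟨0, hn⟩
    set last : Fin n := ⟨n - 1, by omega⟩
    have h1 := hM a hC (last : ℕ) i last rfl (by rw [Fin.le_def]; have := i.isLt; simp [last]; omega)
    have h2 := hM a hC (i : ℕ) i0 i rfl (by rw [Fin.le_def]; simp [i0])
    have hcl : c (last : ℕ) = k := hclast _ (by simp only [last, Fin.val_mk]; omega)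
    have hak : (a (τ last) : ℕ) ≤ k := by have := (a (τ last)).isLt; omega
    have hc0' : c ((i0 : Fin n) : ℕ) = 0 := hc0
    simp only [i0] at h2 hc0'
    omega
  -- converse
  have hconv : ∀ (a : Fin n → Fin (k + 1)),
      (∀ i : Fin n, (a (τ i) : ℕ) = c (i : ℕ)) →
      (Monotone (a ∘ τ) ∧ ∀ i j, i < j → a (τ i) = a (τ j) → τ i < τ j) := by
    intro a ha
    constructor
    · intro i j hij
      simp only [Function.comp_apply]
      rw [Fin.le_def, ha i, ha j]
      exact hc_mono (by rw [Fin.le_def] at hij; omega)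
    · -- tie-breaking
      have key : ∀ (m : ℕ) (i j : Fin n), (j : ℕ) = m → i < j →
          c (i : ℕ) = c (j : ℕ) → τ i < τ j := by
        intro m
        induction m with
        | zero => intro i j hj hij _; rw [Fin.lt_def] at hij; omega
        | succ m ih =>
          intro i j hj hij hcij
          have hmn : m < n := by have := j.isLt; omega
          set j' : Fin n := ⟨m, hmn⟩ with hj'
          have hstepc := hstep j' j (by simp [hj', hj])
          have hcj'j : c ((j' : Fin n) : ℕ) = c (j : ℕ) := by
            have h1 : c (i : ℕ) ≤ c ((j' : Fin n) : ℕ) := by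
              apply hc_mono; rw [Fin.lt_def] at hij; simp [hj']; omega
            have h2 : c ((j' : Fin n) : ℕ) ≤ c (j : ℕ) := by
              apply hc_mono; simp [hj']; omega
            omega
          have hnd : ¬ τ j < τ j' := by
            intro hd
            rw [hcj'j] at hstepc
            simp [hd] at hstepc
          have hne : τ j' ≠ τ j := by
            intro he
            have : j' = j := τ.injective he
            rw [Fin.ext_iff] at this; simp [hj'] at this; omega
          have hj'j : τ j' < τ j := lt_of_le_of_ne (le_of_not_gt hnd) hne
          rcases eq_or_lt_of_le (show i ≤ j' by rw [Fin.le_def]; rw [Fin.lt_def] at hij; simp [hj']; omega) with rfl | hlt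
          · exact hj'j
          · exact lt_trans (ih i j' rfl hlt (by rw [hcj'j, hcij])) hj'j
      intro i j hij he
      apply key (j : ℕ) i j rfl hij
      rw [← ha i, ← ha j, he]
  -- the unique element
  set a₀ : Fin n → Fin (k + 1) := fun x => ⟨c ((τ.symm x : Fin n) : ℕ),
    lt_of_le_of_lt (hc_le _) (Nat.lt_succ_self k)⟩ with ha₀
  have hset : (Finset.univ.filter (fun a : Fin n → Fin (k + 1) => dPerm a = τ)) = {a₀} := by
    ext a
    simp only [Finset.mem_filter, Finset.mem_univ, true_and, Finset.mem_singleton]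
    rw [show (dPerm a = τ) ↔ (τ = Tuple.sort a) from eq_comm, Tuple.eq_sort_iff]
    constructor
    · intro hC
      funext x
      have := hval a hC (τ.symm x)
      rw [Equiv.apply_symm_apply] at this
      exact Fin.ext (by rw [this])
    · rintro rfl
      apply hconv
      intro i
      simp [ha₀]
  rw [hset, Finset.card_singleton]

/-- For any permutation `τ` with exactly `k` descents, the probability that `D_n^k = τ`
(under `a` uniform on `{1,…,k+1}^n`) is `(k+1)^{-n}`; in particular, conditioned on having
exactly `k` descents, `D_n^k` is uniform on the set of permutations with `k` descents. -/
theorem dPerm_uniform (n k : ℕ) (τ : Equiv.Perm (Fin n)) (hτ : descentNum τ = k) :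
    (((Finset.univ.filter (fun a : Fin n → Fin (k + 1) => dPerm a = τ)).card : ℝ)
        / ((k + 1 : ℝ) ^ n) = ((k + 1 : ℝ) ^ n)⁻¹) ∧
    (∀ τ' : Equiv.Perm (Fin n), descentNum τ' = k →
      (Finset.univ.filter (fun a : Fin n → Fin (k + 1) => dPerm a = τ)).card =
      (Finset.univ.filter (fun a : Fin n → Fin (k + 1) => dPerm a = τ')).card) := by
  constructor
  · rw [dPerm_count_one τ hτ]
    simp [one_div]
  · intro τ' hτ'
    rw [dPerm_count_one τ hτ, dPerm_count_one τ' hτ']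
end

section
/- For q ∈ (0,1) and n ≥ 0, the coefficient of x^n in the power series expansion of f_0(x) = (1-q)/(e^{(q-1)x} - q) equals ((1-q)^{n+1}/(q·n!)) · Σ_{k≥1} q^k k^n. -/
private lemma div_aux_f0 (q E : ℝ) (h1 : E ≠ 0) (h2 : 1 - q * E ≠ 0) (h3 : E⁻¹ - q ≠ 0) :
    (1 - q) / (E⁻¹ - q) = (1 - q) * E * (1 - q * E)⁻¹ := by
  rw [← div_eq_mul_inv, div_eq_div_iff h3 h2]
  field_simp

private lemma sum_aux_f0 (m : ℕ) {ρ : ℝ} (hρ0 : 0 < ρ) (hρ1 : ρ < 1) :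
    Summable (fun k : ℕ => ((k : ℝ) + 1) ^ m * ρ ^ k) := by
  have h : Summable (fun k : ℕ => (k : ℝ) ^ m * ρ ^ k) :=
    summable_pow_mul_geometric_of_norm_lt_one m
      (by rw [Real.norm_eq_abs, abs_of_pos hρ0]; exact hρ1)
  have h2 : Summable (fun k : ℕ => ((k : ℝ) + 1) ^ m * ρ ^ (k + 1)) := by
    refine ((summable_nat_add_iff 1).2 h).congr fun k => ?_
    push_cast
    ring
  refine (h2.mul_left ρ⁻¹).congr fun k => ?_
  rw [pow_succ]
  field_simp

/-- For `q ∈ (0,1)`, the `n`-th Taylor coefficient at `0` of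
`f₀(x) = (1-q)/(e^{(q-1)x} - q)` equals `((1-q)^{n+1}/(q·n!)) · Σ_{k ≥ 1} q^k k^n`. -/
theorem coeff_f0 (q : ℝ) (hq0 : 0 < q) (hq1 : q < 1) (n : ℕ) :
    iteratedDeriv n (fun x : ℝ => (1 - q) / (Real.exp ((q - 1) * x) - q)) 0
        / (n.factorial : ℝ)
      = (1 - q) ^ (n + 1) / (q * (n.factorial : ℝ))
          * ∑' k : ℕ, q ^ (k + 1) * ((k + 1 : ℝ)) ^ n := by
  have hc0 : (0:ℝ) < 1 - q := by linarith
  -- find a radius r where q * exp((1-q)r) < 1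
  obtain ⟨ε, hε, hball⟩ : ∃ ε > 0, ∀ y : ℝ, dist y 0 < ε → q * Real.exp ((1 - q) * y) < 1 := by
    rw [← Metric.eventually_nhds_iff]
    have hcont : ContinuousAt (fun x : ℝ => q * Real.exp ((1 - q) * x)) 0 := by fun_prop
    have h0 : q * Real.exp ((1 - q) * 0) < 1 := by simpa using hq1
    exact hcont.eventually_lt continuousAt_const h0
  set r : ℝ := ε / 2 with hrdef
  have hr : 0 < r := by positivity
  set ρ : ℝ := q * Real.exp ((1 - q) * r) with hρdef
  have hρ1 : ρ < 1 := by
    refine hball r ?_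
    rw [Real.dist_eq, sub_zero, abs_of_pos hr, hrdef]
    linarith
  have hρ0 : 0 < ρ := by positivity
  have hmem : ∀ x ∈ Set.Ioo (-r) r, q * Real.exp ((1 - q) * x) ≤ ρ := by
    intro x hx
    have hle : (1 - q) * x ≤ (1 - q) * r := by nlinarith [hx.2.le]
    have := Real.exp_le_exp.2 hle
    nlinarith
  have h0mem : (0:ℝ) ∈ Set.Ioo (-r) r := ⟨by linarith, hr⟩
  -- the key formula for the iterated derivatives on the interval
  have key : ∀ (m : ℕ), ∀ x ∈ Set.Ioo (-r) r,
      iteratedDeriv m (fun x : ℝ => (1 - q) / (Real.exp ((q - 1) * x) - q)) x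
        = ∑' k : ℕ, (1 - q) * q ^ k * ((1 - q) * ((k : ℝ) + 1)) ^ m
            * Real.exp ((1 - q) * ((k : ℝ) + 1) * x) := by
    intro m
    induction m with
    | zero =>
      intro x hx
      simp only [iteratedDeriv_zero, pow_zero, mul_one]
      have hExp : ∀ k : ℕ, Real.exp ((1 - q) * ((k : ℝ) + 1) * x)
          = Real.exp ((1 - q) * x) ^ (k + 1) := by
        intro k
        rw [← Real.exp_nat_mul]
        congr 1
        push_cast
        ring
      have hu1 : q * Real.exp ((1 - q) * x) < 1 := lt_of_le_of_lt (hmem x hx) hρ1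
      have hu0 : 0 ≤ q * Real.exp ((1 - q) * x) := by positivity
      have hsum : ∑' k : ℕ, (1 - q) * q ^ k * Real.exp ((1 - q) * ((k : ℝ) + 1) * x)
          = (1 - q) * Real.exp ((1 - q) * x) * (1 - q * Real.exp ((1 - q) * x))⁻¹ := by
        rw [← tsum_geometric_of_lt_one hu0 hu1, ← tsum_mul_left]
        refine tsum_congr fun k => ?_
        rw [hExp k, mul_pow, pow_succ]
        ring
      have hE0 : (0:ℝ) < Real.exp ((1 - q) * x) := Real.exp_pos _
      have hden1 : 1 - q * Real.exp ((1 - q) * x) ≠ 0 := by linarith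
      have hE : Real.exp ((q - 1) * x) = (Real.exp ((1 - q) * x))⁻¹ := by
        rw [← Real.exp_neg]
        congr 1
        ring
      have hden2 : Real.exp ((q - 1) * x) - q ≠ 0 := by
        rw [hE]
        intro h
        have : 1 - q * Real.exp ((1 - q) * x) = 0 := by
          have h1 : (Real.exp ((1 - q) * x))⁻¹ = q := by linarith
          field_simp at h1
          nlinarith
        exact hden1 this
      rw [hE] at hden2 ⊢
      rw [hsum]
      exact div_aux_f0 q _ (ne_of_gt hE0) hden1 hden2
    | succ m ih =>
      intro x hx
      rw [iteratedDeriv_succ]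
      have heq : iteratedDeriv m (fun x : ℝ => (1 - q) / (Real.exp ((q - 1) * x) - q))
          =ᶠ[nhds x] fun y => ∑' k : ℕ, (1 - q) * q ^ k * ((1 - q) * ((k : ℝ) + 1)) ^ m
            * Real.exp ((1 - q) * ((k : ℝ) + 1) * y) :=
        Filter.eventually_of_mem (isOpen_Ioo.mem_nhds hx) ih
      rw [heq.deriv_eq]
      have hd : HasDerivAt
          (fun y => ∑' k : ℕ, (1 - q) * q ^ k * ((1 - q) * ((k : ℝ) + 1)) ^ m
            * Real.exp ((1 - q) * ((k : ℝ) + 1) * y))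
          (∑' k : ℕ, (1 - q) * q ^ k * ((1 - q) * ((k : ℝ) + 1)) ^ (m + 1)
            * Real.exp ((1 - q) * ((k : ℝ) + 1) * x)) x := by
        refine hasDerivAt_tsum_of_isPreconnected
          (g := fun (k : ℕ) (y : ℝ) => (1 - q) * q ^ k * ((1 - q) * ((k : ℝ) + 1)) ^ m
            * Real.exp ((1 - q) * ((k : ℝ) + 1) * y))
          (g' := fun (k : ℕ) (y : ℝ) => (1 - q) * q ^ k * ((1 - q) * ((k : ℝ) + 1)) ^ (m + 1)
            * Real.exp ((1 - q) * ((k : ℝ) + 1) * y))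
          (u := fun k : ℕ => (1 - q) * ((1 - q) * ((k : ℝ) + 1)) ^ (m + 1)
            * Real.exp ((1 - q) * r) * ρ ^ k)
          ?_ isOpen_Ioo isPreconnected_Ioo ?_ ?_ h0mem ?_ hx
        · refine ((sum_aux_f0 (m + 1) hρ0 hρ1).mul_left
            ((1 - q) * (1 - q) ^ (m + 1) * Real.exp ((1 - q) * r))).congr fun k => ?_
          simp only [mul_pow]
          ring
        · intro k y hy
          have h1 : HasDerivAt (fun z : ℝ => Real.exp ((1 - q) * ((k : ℝ) + 1) * z))
              (Real.exp ((1 - q) * ((k : ℝ) + 1) * y) * ((1 - q) * ((k : ℝ) + 1))) y := by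
            simpa using ((hasDerivAt_id y).const_mul ((1 - q) * ((k : ℝ) + 1))).exp
          have h2 := h1.const_mul ((1 - q) * q ^ k * ((1 - q) * ((k : ℝ) + 1)) ^ m)
          convert h2 using 1
          case e'_4 => rfl
          ring
        · intro k y hy
          rw [Real.norm_eq_abs, abs_of_nonneg (by positivity)]
          have h1 : Real.exp ((1 - q) * ((k : ℝ) + 1) * y)
              ≤ Real.exp ((1 - q) * r) ^ (k + 1) := by
            rw [← Real.exp_nat_mul]
            apply Real.exp_le_exp.2
            push_cast
            have hky : (0:ℝ) ≤ (1 - q) * ((k : ℝ) + 1) := by positivity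
            nlinarith [hy.2.le]
          calc (1 - q) * q ^ k * ((1 - q) * ((k : ℝ) + 1)) ^ (m + 1)
                * Real.exp ((1 - q) * ((k : ℝ) + 1) * y)
              ≤ (1 - q) * q ^ k * ((1 - q) * ((k : ℝ) + 1)) ^ (m + 1)
                * Real.exp ((1 - q) * r) ^ (k + 1) := by
                apply mul_le_mul_of_nonneg_left h1 (by positivity)
            _ = (1 - q) * ((1 - q) * ((k : ℝ) + 1)) ^ (m + 1)
                * Real.exp ((1 - q) * r) * ρ ^ k := by
                rw [hρdef]
                simp only [mul_pow, pow_succ]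
                ring
        · refine ((sum_aux_f0 m hq0 hq1).mul_left ((1 - q) * (1 - q) ^ m)).congr fun k => ?_
          simp only [mul_zero, Real.exp_zero, mul_one, mul_pow]
          ring
      rw [hd.deriv]
  -- finish
  rw [key n 0 h0mem]
  have h2 : ∑' k : ℕ, (1 - q) * q ^ k * ((1 - q) * ((k : ℝ) + 1)) ^ n
        * Real.exp ((1 - q) * ((k : ℝ) + 1) * 0)
      = (1 - q) ^ (n + 1) * ∑' k : ℕ, q ^ k * ((k : ℝ) + 1) ^ n := by
    rw [← tsum_mul_left]
    refine tsum_congr fun k => ?_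
    simp only [mul_zero, Real.exp_zero, mul_one, mul_pow, pow_succ]
    ring
  have h3 : ∑' k : ℕ, q ^ (k + 1) * ((k : ℝ) + 1) ^ n
      = q * ∑' k : ℕ, q ^ k * ((k : ℝ) + 1) ^ n := by
    rw [← tsum_mul_left]
    refine tsum_congr fun k => ?_
    rw [pow_succ]
    ring
  rw [h2, h3]
  have hfac : (n.factorial : ℝ) ≠ 0 := Nat.cast_ne_zero.2 n.factorial_ne_zero
  field_simp
end

section
/- Let q ∈ (0,1) and A = A(x,q) be implicitly defined near x=0 by x = (e^{-qA} − e^{-A})/(1−q) with A(0,q)=0. Then the generating function B(x,q) = (e^{2qA} + ((1−q)^2 A − q − 1) e^{(1+q)A} + q e^{2A}) / (e^{qA} − q e^{A})^2 satisfies the linear ODE ∂_x B − (1+q+2qx A_x) A_x B = x (1+q+2qx A_x) A_x^2, where A_x = ∂A/∂x, and B(0,q)=0. -/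
/-- The path-length generating function expressed in terms of `A = A(x,q)`:
`B = (e^{2qA} + ((1−q)²A − q − 1)e^{(1+q)A} + q e^{2A}) / (e^{qA} − q e^{A})²`. -/
noncomputable def Bfun (q : ℝ) (A : ℝ → ℝ) : ℝ → ℝ := fun x =>
  (Real.exp (2 * q * A x) + ((1 - q) ^ 2 * A x - q - 1) * Real.exp ((1 + q) * A x)
      + q * Real.exp (2 * A x))
    / (Real.exp (q * A x) - q * Real.exp (A x)) ^ 2

/-- If `A` is (near `0`) the solution of `x = (e^{-qA} − e^{-A})/(1−q)` with `A(0) = 0`,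
then `B` satisfies the linear ODE
`∂ₓB − (1+q+2qx Aₓ)·Aₓ·B = x(1+q+2qx Aₓ)·Aₓ²` with `B(0) = 0`. -/
theorem B_ode (q : ℝ) (hq0 : 0 < q) (hq1 : q < 1) (ε : ℝ) (hε : 0 < ε)
    (A : ℝ → ℝ) (hA0 : A 0 = 0)
    (himpl : ∀ x : ℝ, |x| < ε →
      x = (Real.exp (-q * A x) - Real.exp (-(A x))) / (1 - q))
    (hdiff : ∀ x : ℝ, |x| < ε → DifferentiableAt ℝ A x) :
    (∀ x : ℝ, |x| < ε →
      deriv (Bfun q A) x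
          - (1 + q + 2 * q * x * deriv A x) * deriv A x * Bfun q A x
        = x * (1 + q + 2 * q * x * deriv A x) * (deriv A x) ^ 2) ∧
    Bfun q A 0 = 0 := by
  constructor
  · intro x hx
    have hq : (1 : ℝ) - q ≠ 0 := by linarith
    have hA' : HasDerivAt A (deriv A x) x := (hdiff x hx).hasDerivAt
    set a := A x with ha
    set a' := deriv A x with ha'
    have hg : HasDerivAt (fun y : ℝ => (Real.exp (-q * y) - Real.exp (-y)) / (1 - q))
        ((Real.exp (-q * a) * (-q * 1) - Real.exp (-a) * (-1)) / (1 - q)) a := by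
      exact ((((hasDerivAt_id a).const_mul (-q)).congr_deriv (by ring)).exp.sub
        (((hasDerivAt_id a).neg).exp)).div_const (1 - q)
    have hcomp : HasDerivAt (fun y : ℝ => (Real.exp (-q * A y) - Real.exp (-A y)) / (1 - q))
        ((Real.exp (-q * a) * (-q * 1) - Real.exp (-a) * (-1)) / (1 - q) * a') x :=
      hg.comp x hA'
    have hmem : ∀ᶠ y in nhds x, |y| < ε := by
      have : IsOpen {y : ℝ | |y| < ε} := isOpen_lt continuous_abs continuous_const
      exact this.mem_nhds hx
    have hone : (Real.exp (-q * a) * (-q * 1) - Real.exp (-a) * (-1)) / (1 - q) * a' = 1 := by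
      have hid : HasDerivAt (fun y : ℝ => y)
          ((Real.exp (-q * a) * (-q * 1) - Real.exp (-a) * (-1)) / (1 - q) * a') x := by
        apply hcomp.congr_of_eventuallyEq
        exact hmem.mono fun y hy => himpl y hy
      exact hid.unique (hasDerivAt_id x)
    set u := Real.exp a with hu
    set v := Real.exp (q * a) with hv
    have hu0 : u ≠ 0 := Real.exp_ne_zero a
    have hv0 : v ≠ 0 := Real.exp_ne_zero (q * a)
    -- rewrite hone in terms of u,v
    have hnegq : Real.exp (-q * a) = v⁻¹ := by rw [neg_mul, Real.exp_neg]
    have hnega : Real.exp (-a) = u⁻¹ := by rw [Real.exp_neg]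
    rw [hnegq, hnega] at hone
    -- denominator nonzero
    have hD : v - q * u ≠ 0 := by
      intro h
      have hvu : v = q * u := by linarith
      have : (v⁻¹ * (-q * 1) - u⁻¹ * (-1)) = 0 := by
        rw [hvu]
        field_simp
        ring
      rw [this] at hone
      simp at hone
    -- express a'
    have ha2 : a' = (1 - q) * u * v / (v - q * u) := by
      rw [eq_div_iff hD]
      field_simp at hone
      nlinarith [hone]
    -- express x
    have hx2 : x = (u - v) / ((1 - q) * u * v) := by
      have := himpl x hx
      rw [← ha, hnegq, hnega] at this
      rw [this, div_eq_div_iff hq (by positivity)]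
      field_simp
    -- derivative of Bfun
    have hD' : Real.exp (q * a) - q * Real.exp a ≠ 0 := hD
    have h1 : HasDerivAt (fun y => Real.exp (2 * q * A y))
        (Real.exp (2 * q * a) * (2 * q * a')) x := (hA'.const_mul (2 * q)).exp
    have h2n : HasDerivAt (fun y => (1 - q) ^ 2 * A y - q - 1) ((1 - q) ^ 2 * a') x :=
      ((hA'.const_mul ((1 - q) ^ 2)).sub_const q).sub_const 1
    have h2e : HasDerivAt (fun y => Real.exp ((1 + q) * A y))
        (Real.exp ((1 + q) * a) * ((1 + q) * a')) x := (hA'.const_mul (1 + q)).exp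
    have h3 : HasDerivAt (fun y => q * Real.exp (2 * A y))
        (q * (Real.exp (2 * a) * (2 * a'))) x := ((hA'.const_mul 2).exp).const_mul q
    have hnum : HasDerivAt (fun y => Real.exp (2 * q * A y)
        + ((1 - q) ^ 2 * A y - q - 1) * Real.exp ((1 + q) * A y) + q * Real.exp (2 * A y))
        (Real.exp (2 * q * a) * (2 * q * a')
          + ((1 - q) ^ 2 * a' * Real.exp ((1 + q) * a)
            + ((1 - q) ^ 2 * a - q - 1) * (Real.exp ((1 + q) * a) * ((1 + q) * a')))
          + q * (Real.exp (2 * a) * (2 * a'))) x :=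
      (h1.add (h2n.mul h2e)).add h3
    have hd1 : HasDerivAt (fun y => Real.exp (q * A y) - q * Real.exp (A y))
        (Real.exp (q * a) * (q * a') - q * (Real.exp a * a')) x :=
      ((hA'.const_mul q).exp).sub (hA'.exp.const_mul q)
    have hden : HasDerivAt (fun y => (Real.exp (q * A y) - q * Real.exp (A y)) ^ 2)
        ((2 : ℕ) * (Real.exp (q * a) - q * Real.exp a) ^ 1
          * (Real.exp (q * a) * (q * a') - q * (Real.exp a * a'))) x := hd1.pow 2
    have hB : HasDerivAt (Bfun q A)
        (((Real.exp (2 * q * a) * (2 * q * a')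
          + ((1 - q) ^ 2 * a' * Real.exp ((1 + q) * a)
            + ((1 - q) ^ 2 * a - q - 1) * (Real.exp ((1 + q) * a) * ((1 + q) * a')))
          + q * (Real.exp (2 * a) * (2 * a'))) * (Real.exp (q * a) - q * Real.exp a) ^ 2
         - (Real.exp (2 * q * a) + ((1 - q) ^ 2 * a - q - 1) * Real.exp ((1 + q) * a)
            + q * Real.exp (2 * a))
           * ((2 : ℕ) * (Real.exp (q * a) - q * Real.exp a) ^ 1
              * (Real.exp (q * a) * (q * a') - q * (Real.exp a * a'))))
         / ((Real.exp (q * a) - q * Real.exp a) ^ 2) ^ 2) x :=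
      hnum.div hden (pow_ne_zero 2 hD')
    have hBd := hB.deriv
    rw [hBd]
    show _ - _ * a' * Bfun q A x = _
    simp only [Bfun, ← ha]
    -- rewrite exponentials in terms of u, v
    have e1 : Real.exp (2 * q * a) = v * v := by
      rw [hv, ← Real.exp_add]; congr 1; ring
    have e2 : Real.exp ((1 + q) * a) = u * v := by
      rw [hu, hv, ← Real.exp_add]; congr 1; ring
    have e3 : Real.exp (2 * a) = u * u := by
      rw [hu, ← Real.exp_add]; congr 1; ring
    rw [e1, e2, e3, ← hv, ← hu, ha2, hx2]
    have h1q : (1 : ℝ) - q > 0 := by linarith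
    field_simp
    ring
  · simp [Bfun, hA0]
end
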